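/- Suppose Y is a continuous Hausdorff image of a product X = ∏_{i∈I} X_i of compact Hausdorff spaces. Then every compact subset of Y has a neighborhood base that is (sup_{i∈I} w(X_i))^op-like; i.e., χ_K Nt(Y) ≤ sup_{i∈I} w(X_i). -/

import Mathlib

open Cardinal TopologicalSpace

universe u

/-- The weight of a space: the least infinite cardinality of a base. -/
noncomputable def weight (X : Type u) [TopologicalSpace X] : Cardinal.{u} :=
  sInf {c | ∃ B : Set (Set X), IsTopologicalBasis B ∧ c = max #B ℵ₀}

/-- `A` is a neighborhood base of the set `E` in `X`. -/
def IsNbhdBase (X : Type u) [TopologicalSpace X] (E : Set X) (A : Set (Set X)) : Prop :=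
  (∀ u ∈ A, IsOpen u ∧ E ⊆ u) ∧ ∀ v : Set X, IsOpen v → E ⊆ v → ∃ u ∈ A, u ⊆ v

open Set Function

namespace OpLikeAux

variable {X : Type u} [TopologicalSpace X] [CompactSpace X] [T2Space X]

theorem exists_binary_rep (B : Set (Set X)) (hB : IsTopologicalBasis B) :
    ∃ Zs : Set (↥B → Bool), IsClosed Zs ∧
      ∃ q : ↥Zs → X, Continuous q ∧ Surjective q := by
  classical
  let E : ↥B → Bool → Set X := fun U b => if b then closure (U : Set X) else (U : Set X)ᶜ
  have hEclosed : ∀ U b, IsClosed (E U b) := by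
    intro U b
    by_cases hb : b = true
    · simp only [E, hb, if_pos rfl]; exact isClosed_closure
    · have : b = false := by cases b <;> simp_all
      simp only [E, this]
      exact (hB.isOpen U.2).isClosed_compl
  let C : (↥B → Bool) → Set X := fun ε => ⋂ U, E U (ε U)
  have hCclosed : ∀ ε, IsClosed (C ε) := fun ε => isClosed_iInter fun U => hEclosed U (ε U)
  have hsep : ∀ x y : X, x ≠ y → ∃ U : ↥B, x ∈ (U : Set X) ∧ y ∉ closure (U : Set X) := by
    intro x y hxy
    obtain ⟨O₁, O₂, hO₁, hO₂, hx, hy, hdisj⟩ := t2_separation hxy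
    obtain ⟨Ub, hUb, hxU, hUO⟩ := hB.exists_subset_of_mem_open hx hO₁
    refine ⟨⟨Ub, hUb⟩, hxU, fun hyc => ?_⟩
    rw [mem_closure_iff] at hyc
    obtain ⟨z, hz1, hz2⟩ := hyc O₂ hO₂ hy
    exact (Set.disjoint_left.mp hdisj (hUO hz2)) hz1
  have hsub : ∀ ε : ↥B → Bool, ∀ x ∈ C ε, ∀ y ∈ C ε, x = y := by
    intro ε x hx y hy
    by_contra hxy
    obtain ⟨U, hxU, hyU⟩ := hsep x y hxy
    have hxE := Set.mem_iInter.mp hx U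
    have hyE := Set.mem_iInter.mp hy U
    cases hεU : ε U with
    | true => rw [hεU] at hyE; simp only [E, if_pos rfl] at hyE; exact hyU hyE
    | false => rw [hεU] at hxE; simp only [E, Bool.false_eq_true, if_false] at hxE; exact hxE hxU
  -- the key finite-intersection fact: for closed D, {ε | (C ε ∩ D).Nonempty} is closed
  have hkey : ∀ D : Set X, IsClosed D → IsClosed {ε : ↥B → Bool | (C ε ∩ D).Nonempty} := by
    intro D hD
    rw [← isOpen_compl_iff]
    rw [isOpen_iff_mem_nhds]
    intro ε hε
    simp only [Set.mem_compl_iff, Set.mem_setOf_eq, Set.not_nonempty_iff_eq_empty] at hε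
    -- C ε ∩ D = ∅ ; extract finite subfamily
    have hDc : IsCompact D := hD.isCompact
    have : (D ∩ ⋂ U, E U (ε U)) = ∅ := by
      rw [Set.inter_comm]; exact hε
    obtain ⟨s, hs⟩ := hDc.elim_finite_subfamily_closed _ (fun U => hEclosed U (ε U)) this
    -- the cylinder around ε
    have hcyl : IsOpen {ε' : ↥B → Bool | ∀ U ∈ s, ε' U = ε U} := by
      have : {ε' : ↥B → Bool | ∀ U ∈ s, ε' U = ε U} =
          ⋂ U ∈ s, (fun ε' : ↥B → Bool => ε' U) ⁻¹' {ε U} := by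
        ext ε'; simp [Set.mem_iInter]
      rw [this]
      exact isOpen_biInter_finset fun U _ => (continuous_apply U).isOpen_preimage _ trivial
    rw [mem_nhds_iff]
    refine ⟨_, ?_, hcyl, fun U _ => rfl⟩
    intro ε' hε'
    simp only [Set.mem_compl_iff, Set.mem_setOf_eq, Set.not_nonempty_iff_eq_empty]
    have hsub2 : C ε' ∩ D ⊆ (D ∩ ⋂ U ∈ s, E U (ε U)) := by
      intro x hx
      refine ⟨hx.2, Set.mem_iInter₂.mpr fun U hU => ?_⟩
      have := Set.mem_iInter.mp hx.1 U
      rwa [hε' U hU] at this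
    rw [← Set.subset_empty_iff]
    exact hs ▸ hsub2
  refine ⟨{ε | (C ε).Nonempty}, ?_, ?_⟩
  · have := hkey Set.univ isClosed_univ
    simpa using this
  · -- define q
    have hq : ∀ ε : ↥{ε : ↥B → Bool | (C ε).Nonempty}, (C ε.1).Nonempty := fun ε => ε.2
    refine ⟨fun ε => (hq ε).some, ?_, ?_⟩
    · -- continuity
      rw [continuous_iff_isClosed]
      intro D hD
      have : (fun ε : ↥{ε : ↥B → Bool | (C ε).Nonempty} => (hq ε).some) ⁻¹' D =
          Subtype.val ⁻¹' {ε : ↥B → Bool | (C ε ∩ D).Nonempty} := by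
        ext ε
        simp only [Set.mem_preimage, Set.mem_setOf_eq]
        constructor
        · intro h; exact ⟨(hq ε).some, (hq ε).some_mem, h⟩
        · rintro ⟨x, hx1, hx2⟩
          have := hsub ε.1 x hx1 _ (hq ε).some_mem
          rwa [this] at hx2
      rw [this]
      exact (hkey D hD).preimage continuous_subtype_val
    · -- surjectivity
      intro x
      let ε : ↥B → Bool := fun U => if x ∈ (U : Set X) then true else false
      have hxC : x ∈ C ε := by
        refine Set.mem_iInter.mpr fun U => ?_
        by_cases hxU : x ∈ (U : Set X)
        · simp only [ε, if_pos hxU, E]; exact subset_closure hxU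
        · simp only [ε, if_neg hxU, E]
          simpa using hxU
      refine ⟨⟨ε, ⟨x, hxC⟩⟩, ?_⟩
      exact hsub ε _ (Set.Nonempty.some_mem _) x hxC

end OpLikeAux

set_option linter.unusedSectionVars false
namespace OpLikeKey

variable {ι : Type u} {β : ι → Type u} {Z : ∀ i, Set (β i → Bool)}
variable {Y : Type u} [TopologicalSpace Y] [T2Space Y]

/-- evaluation of a point of the product at a coordinate -/
def ev (x : ∀ i, ↥(Z i)) (j : Σ i, β i) : Bool := (x j.1).1 j.2

theorem continuous_ev (j : Σ i, β i) : Continuous fun x : ∀ i, ↥(Z i) => ev x j :=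
  (continuous_apply j.2).comp ((continuous_subtype_val).comp (continuous_apply j.1))

/-- canonical clopen box around L with support G -/
def MM (L : Set (∀ i, ↥(Z i))) (G : Finset (Σ i, β i)) : Set (∀ i, ↥(Z i)) :=
  {x | ∃ l ∈ L, ∀ j ∈ G, ev l j = ev x j}

theorem isClopen_MM (L : Set (∀ i, ↥(Z i))) (G : Finset (Σ i, β i)) :
    IsClopen (MM L G) := by
  classical
  let ρ : (∀ i, ↥(Z i)) → (↥G → Bool) := fun x j => ev x j.1
  have hρ : Continuous ρ := continuous_pi fun j => continuous_ev j.1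
  have hMG : MM L G = ρ ⁻¹' (ρ '' L) := by
    ext x
    constructor
    · rintro ⟨l, hl, h⟩; exact ⟨l, hl, funext fun j => h j.1 j.2⟩
    · rintro ⟨l, hl, h⟩; exact ⟨l, hl, fun j hj => congrFun h ⟨j, hj⟩⟩
  rw [hMG]
  exact ⟨(isClosed_discrete _).preimage hρ, (isOpen_discrete _).preimage hρ⟩

theorem subset_MM (L : Set (∀ i, ↥(Z i))) (G : Finset (Σ i, β i)) : L ⊆ MM L G :=
  fun l hl => ⟨l, hl, fun _ _ => rfl⟩

theorem MM_antitone (L : Set (∀ i, ↥(Z i))) {G G' : Finset (Σ i, β i)} (h : G' ⊆ G) :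
    MM L G ⊆ MM L G' := by
  rintro x ⟨l, hl, hagree⟩
  exact ⟨l, hl, fun j hj => hagree j (h hj)⟩

/-- the canonical open neighborhood of K induced by the box with support G -/
def uu (g : (∀ i, ↥(Z i)) → Y) (K : Set Y) (G : Finset (Σ i, β i)) : Set Y :=
  (g '' (MM (g ⁻¹' K) G)ᶜ)ᶜ

theorem isOpen_uu (g : (∀ i, ↥(Z i)) → Y) (hg : Continuous g)
    (hP : CompactSpace (∀ i, ↥(Z i))) (K : Set Y) (G : Finset (Σ i, β i)) :
    IsOpen (uu g K G) := by
  haveI := hP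
  have hcl : IsClosed (MM (g ⁻¹' K) G)ᶜ := (isClopen_MM _ G).2.isClosed_compl
  have hcp : IsCompact (MM (g ⁻¹' K) G)ᶜ := hcl.isCompact
  exact ((hcp.image hg).isClosed).isOpen_compl

theorem K_subset_uu (g : (∀ i, ↥(Z i)) → Y) (K : Set Y) (G : Finset (Σ i, β i)) :
    K ⊆ uu g K G := by
  intro y hy
  rintro ⟨x, hx, rfl⟩
  exact hx (subset_MM _ G (by simpa [Set.mem_preimage] using hy))

theorem preimage_uu_subset (g : (∀ i, ↥(Z i)) → Y) (K : Set Y) (G : Finset (Σ i, β i)) :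
    g ⁻¹' (uu g K G) ⊆ MM (g ⁻¹' K) G := by
  intro x hx
  by_contra hxM
  exact hx ⟨x, hxM, rfl⟩

theorem uu_congr (g : (∀ i, ↥(Z i)) → Y) (K : Set Y) {G G' : Finset (Σ i, β i)}
    (h : MM (g ⁻¹' K) G = MM (g ⁻¹' K) G') : uu g K G = uu g K G' := by
  unfold uu; rw [h]

/-- base lemma : every open set around L contains some box -/
theorem base_MM (hP : CompactSpace (∀ i, ↥(Z i))) (L : Set (∀ i, ↥(Z i)))
    (hL : IsClosed L) {W : Set (∀ i, ↥(Z i))} (hW : IsOpen W) (hLW : L ⊆ W) :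
    ∃ G : Finset (Σ i, β i), MM L G ⊆ W := by
  classical
  haveI := hP
  by_contra hcon
  push_neg at hcon
  have hne : ∀ G : Finset (Σ i, β i), (MM L G \ W).Nonempty := by
    intro G
    obtain ⟨x, hx1, hx2⟩ := Set.not_subset.mp (hcon G)
    exact ⟨x, hx1, hx2⟩
  have hdir : Directed (· ⊇ ·) (fun G : Finset (Σ i, β i) => MM L G \ W) := by
    intro G G'
    refine ⟨G ∪ G', ?_, ?_⟩
    · exact Set.diff_subset_diff_left (MM_antitone L Finset.subset_union_left)
    · exact Set.diff_subset_diff_left (MM_antitone L Finset.subset_union_right)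
  have hcl : ∀ G : Finset (Σ i, β i), IsClosed (MM L G \ W) :=
    fun G => (isClopen_MM L G).1.sdiff hW
  have hcp : ∀ G : Finset (Σ i, β i), IsCompact (MM L G \ W) := fun G => (hcl G).isCompact
  obtain ⟨x, hx⟩ := IsCompact.nonempty_iInter_of_directed_nonempty_isCompact_isClosed
    _ hdir hne hcp hcl
  have hxM : ∀ G : Finset (Σ i, β i), x ∈ MM L G := fun G => (Set.mem_iInter.mp hx G).1
  have hxW : x ∉ W := (Set.mem_iInter.mp hx ∅).2
  -- now x must be in L
  have hxL : x ∈ L := by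
    have hne2 : ∀ G : Finset (Σ i, β i),
        ({l | l ∈ L ∧ ∀ j ∈ G, ev l j = ev x j} : Set (∀ i, ↥(Z i))).Nonempty := by
      intro G
      obtain ⟨l, hl, hagree⟩ := hxM G
      exact ⟨l, hl, hagree⟩
    have hdir2 : Directed (· ⊇ ·)
        (fun G : Finset (Σ i, β i) => {l | l ∈ L ∧ ∀ j ∈ G, ev l j = ev x j}) := by
      intro G G'
      refine ⟨G ∪ G', fun l hl => ⟨hl.1, fun j hj => hl.2 j (Finset.mem_union_left _ hj)⟩,
        fun l hl => ⟨hl.1, fun j hj => hl.2 j (Finset.mem_union_right _ hj)⟩⟩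
    have hcl2 : ∀ G : Finset (Σ i, β i),
        IsClosed {l | l ∈ L ∧ ∀ j ∈ G, ev l j = ev x j} := by
      intro G
      have : {l | l ∈ L ∧ ∀ j ∈ G, ev l j = ev x j} =
          L ∩ ⋂ j ∈ G, (fun l => ev l j) ⁻¹' {ev x j} := by
        ext l; simp [Set.mem_iInter]
      rw [this]
      exact hL.inter (isClosed_biInter fun j _ =>
        (isClosed_discrete _).preimage (continuous_ev j))
    obtain ⟨l, hl⟩ := IsCompact.nonempty_iInter_of_directed_nonempty_isCompact_isClosed
      _ hdir2 hne2 (fun G => (hcl2 G).isCompact) hcl2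
    have hlx : l = x := by
      funext i
      apply Subtype.ext
      funext b
      exact (Set.mem_iInter.mp hl {⟨i, b⟩}).2 ⟨i, b⟩ (Finset.mem_singleton_self _)
    have := (Set.mem_iInter.mp hl ∅).1
    rwa [hlx] at this
  exact hxW (hLW hxL)

theorem base_uu (g : (∀ i, ↥(Z i)) → Y) (hg : Continuous g) (hgs : Surjective g)
    (hP : CompactSpace (∀ i, ↥(Z i))) (K : Set Y) (hK : IsCompact K)
    {v : Set Y} (hv : IsOpen v) (hKv : K ⊆ v) :
    ∃ G : Finset (Σ i, β i), uu g K G ⊆ v := by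
  have hLcl : IsClosed (g ⁻¹' K) := (hK.isClosed).preimage hg
  obtain ⟨G, hG⟩ := base_MM hP (g ⁻¹' K) hLcl (hv.preimage hg)
    (Set.preimage_mono hKv)
  refine ⟨G, fun y hy => ?_⟩
  obtain ⟨x, rfl⟩ := hgs y
  exact hG (preimage_uu_subset g K G hy)

/-- Lemma B : any `uu` above `uu g K F` is supported on the blocks of a fixed finite set. -/
theorem lemmaB [DecidableEq ι] (g : (∀ i, ↥(Z i)) → Y) (K : Set Y)
    {F G F₁ : Finset (Σ i, β i)} (hF₁ : MM (g ⁻¹' K) F₁ ⊆ g ⁻¹' (uu g K F))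
    (hFG : uu g K F ⊆ uu g K G) :
    uu g K G = uu g K (G.filter (fun j => j.1 ∈ F₁.image Sigma.fst)) := by
  classical
  set L := g ⁻¹' K with hL
  set bl := F₁.image Sigma.fst with hbl
  set G' := G.filter (fun j => j.1 ∈ bl) with hG'
  apply uu_congr
  apply Set.Subset.antisymm (MM_antitone L (Finset.filter_subset _ _))
  -- M G' ⊆ M G, via the splice
  intro x hx
  obtain ⟨l, hl, hagree⟩ := hx
  -- the spliced point
  let z : ∀ i, ↥(Z i) := fun i => if i ∈ bl then l i else x i
  have hzF₁ : z ∈ MM L F₁ := by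
    refine ⟨l, hl, fun j hj => ?_⟩
    have hjbl : j.1 ∈ bl := Finset.mem_image_of_mem Sigma.fst hj
    simp only [ev, z, if_pos hjbl]
  have hzMG : z ∈ MM L G := by
    have h1 : z ∈ g ⁻¹' (uu g K F) := hF₁ hzF₁
    have h2 : z ∈ g ⁻¹' (uu g K G) := hFG h1
    exact preimage_uu_subset g K G h2
  obtain ⟨l₂, hl₂, hagree₂⟩ := hzMG
  refine ⟨l₂, hl₂, fun j hj => ?_⟩
  by_cases hjbl : j.1 ∈ bl
  · have hjG' : j ∈ G' := Finset.mem_filter.mpr ⟨hj, hjbl⟩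
    have e1 : ev l₂ j = ev z j := hagree₂ j hj
    have e2 : ev z j = ev l j := by simp only [ev, z, if_pos hjbl]
    have e3 : ev l j = ev x j := hagree j hjG'
    rw [e1, e2, e3]
  · have e1 : ev l₂ j = ev z j := hagree₂ j hj
    have e2 : ev z j = ev x j := by simp only [ev, z, if_neg hjbl]
    rw [e1, e2]


theorem key [DecidableEq ι] (g : (∀ i, ↥(Z i)) → Y) (hg : Continuous g) (hgs : Surjective g)
    (hP : CompactSpace (∀ i, ↥(Z i))) (K : Set Y) (hK : IsCompact K)
    (κ : Cardinal.{u}) (hκ : ℵ₀ ≤ κ) (hβ : ∀ i, #(β i) ≤ κ) :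
    ∃ A : Set (Set Y), IsNbhdBase Y K A ∧
      ∀ u ∈ A, #{v : Set Y // v ∈ A ∧ u ⊂ v} < κ := by
  classical
  haveI : IsWellOrder (Cardinal.ord κ).ToType (· < ·) := isWellOrder_lt
  -- the height structure
  have hemb : ∀ i, Nonempty (β i ↪ (Cardinal.ord κ).ToType) := by
    intro i
    rw [← Cardinal.le_def, Cardinal.mk_ord_toType]
    exact hβ i
  let e : ∀ i, β i ↪ (Cardinal.ord κ).ToType := fun i => (hemb i).some
  let p : (Σ i, β i) → (Cardinal.ord κ).ToType := fun j => e j.1 j.2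
  let pη : (Σ i, β i) → Ordinal := fun j => Ordinal.typein (α := (Cardinal.ord κ).ToType) (· < ·) (p j)
  let η : Finset (Σ i, β i) → Ordinal := fun G => G.sup pη
  have hηlt : ∀ G, η G < Cardinal.ord κ := by
    intro G
    have h0 : (0 : Ordinal) < Cardinal.ord κ := by
      have := Cardinal.isSuccLimit_ord hκ
      exact this.pos
    refine Finset.sup_lt_iff h0 |>.mpr fun j _ => ?_
    exact Ordinal.typein_lt_self (p j)
  -- the processing well-order
  let rel : Finset (Σ i, β i) → Finset (Σ i, β i) → Prop := fun G G' =>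
    η G < η G' ∨ (η G = η G' ∧ WellOrderingRel G G')
  have hwf : WellFounded rel := by
    have hsubrel : ∀ G G', rel G G' →
        InvImage (Prod.Lex ((· < ·) : Ordinal → Ordinal → Prop) WellOrderingRel)
          (fun G => (η G, G)) G G' := by
      intro G G' h
      rcases h with h | ⟨h1, h2⟩
      · exact Prod.Lex.left _ _ h
      · show Prod.Lex _ _ (η G, G) (η G', G')
        rw [h1]
        exact Prod.Lex.right _ h2
    exact Subrelation.wf (fun {G G'} h => hsubrel G G' h) (InvImage.wf _
      (WellFounded.prod_lex Ordinal.lt_wf (IsWellFounded.wf)))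
  have htri : ∀ G G' : Finset (Σ i, β i), G = G' ∨ rel G G' ∨ rel G' G := by
    intro G G'
    rcases lt_trichotomy (η G) (η G') with h | h | h
    · exact Or.inr (Or.inl (Or.inl h))
    · rcases (@trichotomous _ WellOrderingRel _ G G') with h2 | h2 | h2
      · exact Or.inr (Or.inl (Or.inr ⟨h, h2⟩))
      · exact Or.inl h2
      · exact Or.inr (Or.inr (Or.inr ⟨h.symm, h2⟩))
    · exact Or.inr (Or.inr (Or.inl h))
  have hηle : ∀ G G', rel G G' → η G ≤ η G' := by
    intro G G' h
    rcases h with h | ⟨h1, _⟩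
    · exact le_of_lt h
    · exact le_of_eq h1
  -- the greedy selection
  let kept : Finset (Σ i, β i) → Prop := hwf.fix
    (fun G ih => ∀ G' (h : rel G' G), ih G' h → ¬ (uu g K G' ⊆ uu g K G))
  have hkeptIff : ∀ G, kept G ↔
      (∀ G', rel G' G → kept G' → ¬ (uu g K G' ⊆ uu g K G)) := by
    intro G
    show hwf.fix (fun G ih => ∀ G' (h : rel G' G), ih G' h → ¬ (uu g K G' ⊆ uu g K G)) G ↔ _
    rw [hwf.fix_eq]
  let A : Set (Set Y) := {s | ∃ G, kept G ∧ s = uu g K G}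
  refine ⟨A, ⟨?_, ?_⟩, ?_⟩
  · rintro u ⟨G, _, rfl⟩
    exact ⟨isOpen_uu g hg hP K G, K_subset_uu g K G⟩
  · intro v hv hKv
    obtain ⟨G₀, hG₀⟩ := base_uu g hg hgs hP K hK hv hKv
    by_cases hk : kept G₀
    · exact ⟨uu g K G₀, ⟨G₀, hk, rfl⟩, hG₀⟩
    · rw [hkeptIff G₀] at hk
      push_neg at hk
      obtain ⟨G', hrel, hkG', hsub⟩ := hk
      exact ⟨uu g K G', ⟨G', hkG', rfl⟩, hsub.trans hG₀⟩
  · rintro u₀ hu₀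
    obtain ⟨F, hkF, rfl⟩ := hu₀
    -- choose the finite support F₁ for the saturation of uu g K F
    have hLcl : IsClosed (g ⁻¹' K) := (hK.isClosed).preimage hg
    have hΛ : IsOpen (g ⁻¹' (uu g K F)) := (isOpen_uu g hg hP K F).preimage hg
    have hLΛ : g ⁻¹' K ⊆ g ⁻¹' (uu g K F) := Set.preimage_mono (K_subset_uu g K F)
    obtain ⟨F₁, hF₁⟩ := base_MM hP (g ⁻¹' K) hLcl hΛ hLΛ
    set bl : Finset ι := F₁.image Sigma.fst with hbldef
    set 𝒲 : Set (Σ i, β i) := {j | j.1 ∈ bl ∧ pη j ≤ η F} with h𝒲def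
    -- choose representatives for the supersets
    set S := {v : Set Y // v ∈ A ∧ uu g K F ⊂ v} with hSdef
    have hGv : ∀ v : S, ∃ G, kept G ∧ v.1 = uu g K G := fun v => v.2.1
    choose Gv hGv1 hGv2 using hGv
    have hsupset : ∀ v : S, uu g K F ⊆ uu g K (Gv v) := by
      intro v
      rw [← hGv2 v]
      exact (v.2.2).subset
    have hrelGF : ∀ v : S, rel (Gv v) F := by
      intro v
      rcases htri (Gv v) F with h | h | h
      · exfalso
        apply (v.2.2).ne'
        rw [hGv2 v, h]
      · exact h
      · exfalso
        exact ((hkeptIff (Gv v)).mp (hGv1 v)) F h hkF (hsupset v)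
    let G' : S → Finset (Σ i, β i) := fun v => (Gv v).filter (fun j => j.1 ∈ bl)
    have hG'val : ∀ v : S, uu g K (G' v) = v.1 := by
      intro v
      have := lemmaB g K hF₁ (hsupset v)
      rw [← this, hGv2 v]
    have hG'sub : ∀ v : S, ∀ j ∈ G' v, j ∈ 𝒲 := by
      intro v j hj
      obtain ⟨hj1, hj2⟩ := Finset.mem_filter.mp hj
      refine ⟨hj2, ?_⟩
      exact (Finset.le_sup hj1).trans (hηle _ _ (hrelGF v))
    -- the injection into finite subsets of the small set 𝒲
    let Φ : S → Finset ↥𝒲 := fun v => (G' v).subtype (· ∈ 𝒲)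
    have hΦinj : Function.Injective Φ := by
      intro v₁ v₂ h
      have h2 : G' v₁ = G' v₂ := by
        have e1 : ((G' v₁).subtype (· ∈ 𝒲)).map (Function.Embedding.subtype _) = G' v₁ := by
          rw [Finset.subtype_map, Finset.filter_true_of_mem (hG'sub v₁)]
        have e2 : ((G' v₂).subtype (· ∈ 𝒲)).map (Function.Embedding.subtype _) = G' v₂ := by
          rw [Finset.subtype_map, Finset.filter_true_of_mem (hG'sub v₂)]
        rw [← e1, ← e2]
        exact congrArg _ h
      apply Subtype.ext
      rw [← hG'val v₁, ← hG'val v₂, h2]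
    have hS1 : #S ≤ #(Finset ↥𝒲) := Cardinal.mk_le_of_injective hΦinj
    -- cardinality bounds
    have hηF : η F < Cardinal.ord κ := hηlt F
    have hsucc : η F + 1 < Cardinal.ord κ := by
      have := (Cardinal.isSuccLimit_ord hκ).succ_lt hηF
      rwa [← Ordinal.add_one_eq_succ] at this
    have hsucc' : η F + 1 < Ordinal.type
        ((· < ·) : (Cardinal.ord κ).ToType → (Cardinal.ord κ).ToType → Prop) := by
      rwa [Ordinal.type_toType]
    let wstar : (Cardinal.ord κ).ToType := Ordinal.enum (· < ·) ⟨η F + 1, hsucc'⟩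
    have h𝒲emb : #↥𝒲 ≤ #(↥bl × {w : (Cardinal.ord κ).ToType // w < wstar}) := by
      refine Cardinal.mk_le_of_injective (f := fun j =>
        (⟨j.1.1, j.2.1⟩, ⟨p j.1, ?_⟩)) ?_
      · -- p j.1 < wstar
        have h1 : pη j.1 ≤ η F := j.2.2
        have h2 : pη j.1 < η F + 1 := lt_of_le_of_lt h1 (by
          exact lt_of_lt_of_le (lt_add_one _) le_rfl)
        have h3 : Ordinal.typein (α := (Cardinal.ord κ).ToType) (· < ·) (p j.1) <
            Ordinal.typein (α := (Cardinal.ord κ).ToType) (· < ·) wstar := by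
          rwa [Ordinal.typein_enum]
        exact (Ordinal.typein_lt_typein (· < ·)).mp h3
      · rintro ⟨⟨ia, ba⟩, ha⟩ ⟨⟨ib, bb⟩, hb⟩ hab
        simp only [Prod.mk.injEq, Subtype.mk.injEq] at hab
        obtain ⟨hi, hw⟩ := hab
        subst hi
        have : ba = bb := (e ia).injective hw
        subst this
        rfl
    have hbl : #↥bl < κ := by
      rw [Cardinal.mk_coe_finset]
      exact lt_of_lt_of_le (Cardinal.nat_lt_aleph0 _) hκ
    have hseg : #{w : (Cardinal.ord κ).ToType // w < wstar} < κ := by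
      have : #{w : (Cardinal.ord κ).ToType // w < wstar} = (η F + 1).card := by
        have := Ordinal.card_typein
          (r := ((· < ·) : (Cardinal.ord κ).ToType → (Cardinal.ord κ).ToType → Prop)) wstar
        rw [Ordinal.typein_enum] at this
        exact this.symm
      rw [this]
      exact (Cardinal.lt_ord).mp hsucc
    have h𝒲 : #↥𝒲 < κ := by
      refine lt_of_le_of_lt h𝒲emb ?_
      rw [Cardinal.mk_prod, Cardinal.lift_id, Cardinal.lift_id]
      exact Cardinal.mul_lt_of_lt hκ hbl hseg
    have hfin : #(Finset ↥𝒲) < κ := by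
      rcases lt_or_eq_of_le hκ with hlt | heq
      · have h1 : #(Finset ↥𝒲) ≤ #(Multiset ↥𝒲) :=
          Cardinal.mk_le_of_injective Finset.val_injective
      
        have h2 : #(Multiset ↥𝒲) ≤ #(List ↥𝒲) := Cardinal.mk_quotient_le
        have h3 : #(List ↥𝒲) ≤ max ℵ₀ #↥𝒲 := Cardinal.mk_list_le_max _
        refine lt_of_le_of_lt (h1.trans (h2.trans h3)) ?_
        exact max_lt hlt h𝒲
      · have : #↥𝒲 < ℵ₀ := by rw [heq]; exact h𝒲
        have hfin𝒲 : Finite ↥𝒲 := Cardinal.lt_aleph0_iff_finite.mp this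
        haveI := Fintype.ofFinite ↥𝒲
        have : #(Finset ↥𝒲) < ℵ₀ := Cardinal.lt_aleph0_iff_finite.mpr inferInstance
        rwa [← heq]
    exact lt_of_le_of_lt hS1 hfin

end OpLikeKey

/-- If a Hausdorff space `Y` is a continuous image of a product `∏ i, X i` of compact
Hausdorff spaces, then every compact subset of `Y` has a `(sup_i w(X i))`-op-like
neighborhood base; i.e. `χ_K Nt(Y) ≤ sup_i w(X i)`. -/
theorem compact_nbhd_base_op_like_of_image_of_product {ι : Type u} [Nonempty ι]
    {X : ι → Type u} [∀ i, TopologicalSpace (X i)] [∀ i, CompactSpace (X i)]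
    [∀ i, T2Space (X i)] {Y : Type u} [TopologicalSpace Y] [T2Space Y]
    (f : (∀ i, X i) → Y) (hf : Continuous f) (hsurj : Function.Surjective f)
    (K : Set Y) (hK : IsCompact K) :
    ∃ A : Set (Set Y), IsNbhdBase Y K A ∧
      ∀ u ∈ A, #{v : Set Y // v ∈ A ∧ u ⊂ v} < ⨆ i, weight (X i) := by
  classical
  set κ := ⨆ i, weight (X i) with hκdef
  have hwmem : ∀ i : ι, weight (X i) ∈
      {c | ∃ B : Set (Set (X i)), IsTopologicalBasis B ∧ c = max #B ℵ₀} := by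
    intro i
    apply csInf_mem
    exact ⟨max #{s : Set (X i) | IsOpen s} ℵ₀, {s | IsOpen s},
      isTopologicalBasis_opens, rfl⟩
  have hwle : ∀ i, weight (X i) ≤ κ := fun i => le_ciSup (Cardinal.bddAbove_range _) i
  have hκinf : ℵ₀ ≤ κ := by
    obtain ⟨i⟩ := ‹Nonempty ι›
    obtain ⟨B, hB, hBeq⟩ := hwmem i
    calc ℵ₀ ≤ max #B ℵ₀ := le_max_right _ _
    _ = weight (X i) := hBeq.symm
    _ ≤ κ := hwle i
  choose Bs hBs1 hBs2 using hwmem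
  have hBsle : ∀ i, #(↥(Bs i)) ≤ κ := by
    intro i
    calc #(↥(Bs i)) ≤ max #(↥(Bs i)) ℵ₀ := le_max_left _ _
    _ = weight (X i) := (hBs2 i).symm
    _ ≤ κ := hwle i
  have hrep := fun i => OpLikeAux.exists_binary_rep (Bs i) (hBs1 i)
  choose Zs hZs1 q hq1 hq2 using hrep
  haveI hPc : ∀ i, CompactSpace ↥(Zs i) := by
    intro i
    rw [← isCompact_iff_compactSpace]
    exact (hZs1 i).isCompact
  haveI : CompactSpace (∀ i, ↥(Zs i)) := Pi.compactSpace
  let h : (∀ i, ↥(Zs i)) → (∀ i, X i) := fun z i => q i (z i)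
  have hhc : Continuous h := continuous_pi fun i => (hq1 i).comp (continuous_apply i)
  have hhs : Function.Surjective h := by
    intro x
    have hx := fun i => hq2 i (x i)
    choose z hz using hx
    exact ⟨z, funext hz⟩
  exact OpLikeKey.key (β := fun i => ↥(Bs i)) (Z := Zs) (f ∘ h) (hf.comp hhc)
    (hsurj.comp hhs) inferInstance K hK κ hκinf hBsle
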